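/- Let T be a power-bounded operator on a Banach space X, let M ⊆ X* be the set of functionals x* through which there exists a bounded complete trajectory for T*, and let X₀ = {x ∈ X : ‖T^n x‖ → 0}. Then the annihilator of M in X equals X₀. -/

import Mathlib

open Filter Topology

/-- A bounded sequence of complex numbers tends to its `limUnder` along any ultrafilter. -/
private lemma ult_tendsto (U : Ultrafilter ℕ) (c : ℕ → ℂ) (R : ℝ) (h : ∀ n, ‖c n‖ ≤ R) :
    Tendsto c (U : Filter ℕ) (𝓝 (limUnder (U : Filter ℕ) c)) := by
  have hle : (U.map c : Filter ℂ) ≤ Filter.principal (Metric.closedBall 0 R) := by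
    rw [le_principal_iff, Ultrafilter.coe_map, mem_map]
    exact Filter.Eventually.of_forall fun n => by
      simpa [Metric.mem_closedBall, dist_zero_right] using h n
  obtain ⟨z, _, hz⟩ := (isCompact_closedBall (0 : ℂ) R).ultrafilter_le_nhds (U.map c) hle
  have hz' : Tendsto c (U : Filter ℕ) (𝓝 z) := by
    rwa [Ultrafilter.coe_map] at hz
  rwa [hz'.limUnder_eq]

/-- The annihilator of the set of functionals through which there is a bounded complete
trajectory for `T*` equals the space of vectors whose orbit under `T` tends to zero. -/
theorem stmt10 {X : Type*} [NormedAddCommGroup X] [NormedSpace ℂ X] [CompleteSpace X]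
    (T : X →L[ℂ] X) (hpb : ∃ K : ℝ, ∀ n : ℕ, ‖T ^ n‖ ≤ K) :
    {x : X | ∀ f : X →L[ℂ] ℂ,
        (∃ xs : ℤ → (X →L[ℂ] ℂ), xs 0 = f ∧ (∀ n : ℤ, (xs n).comp T = xs (n + 1)) ∧
          ∃ C : ℝ, ∀ n : ℤ, ‖xs n‖ ≤ C) → f x = 0} =
      {x : X | Tendsto (fun n : ℕ => ‖(T ^ n) x‖) atTop (𝓝 0)} := by
  obtain ⟨K, hK⟩ := hpb
  set K' : ℝ := max K 1 with hK'def
  have hK' : ∀ n : ℕ, ‖T ^ n‖ ≤ K' := fun n => (hK n).trans (le_max_left _ _)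
  have hK'pos : (0 : ℝ) < K' := lt_of_lt_of_le one_pos (le_max_right _ _)
  ext x
  simp only [Set.mem_setOf_eq]
  constructor
  · -- hard direction: annihilator ⊆ X₀
    intro hx
    by_contra hnot
    -- extract a frequent lower bound
    rw [Metric.tendsto_atTop] at hnot
    push_neg at hnot
    obtain ⟨ε, hε, hfreq⟩ := hnot
    -- uniform lower bound on the whole orbit
    have hlow : ∀ m : ℕ, ε / K' ≤ ‖(T ^ m) x‖ := by
      intro m
      obtain ⟨n, hnm, hn⟩ := hfreq m
      have hn' : ε ≤ ‖(T ^ n) x‖ := by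
        rw [Real.dist_eq, sub_zero, abs_of_nonneg (norm_nonneg _)] at hn
        exact hn
      have hsplit : (T ^ n) x = (T ^ (n - m)) ((T ^ m) x) := by
        rw [← ContinuousLinearMap.comp_apply, ← ContinuousLinearMap.mul_def, ← pow_add]
        congr 2
        omega
      have : ε ≤ K' * ‖(T ^ m) x‖ := by
        calc ε ≤ ‖(T ^ n) x‖ := hn'
          _ = ‖(T ^ (n - m)) ((T ^ m) x)‖ := by rw [hsplit]
          _ ≤ ‖T ^ (n - m)‖ * ‖(T ^ m) x‖ := (T ^ (n - m)).le_opNorm _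
          _ ≤ K' * ‖(T ^ m) x‖ := by
              exact mul_le_mul_of_nonneg_right (hK' _) (norm_nonneg _)
      exact (div_le_iff₀' hK'pos).mpr this
    have hne : ∀ n : ℕ, (T ^ n) x ≠ 0 := by
      intro n h0
      have := hlow n
      rw [h0, norm_zero] at this
      exact absurd this (not_le.mpr (div_pos hε hK'pos))
    -- Hahn-Banach functionals
    have hf : ∀ n : ℕ, ∃ g : X →L[ℂ] ℂ, ‖g‖ = 1 ∧ g ((T ^ n) x) = ‖(T ^ n) x‖ :=
      fun n => exists_dual_vector ℂ _ (norm_ne_zero_iff.mpr (hne n))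
    choose f hf1 hf2 using hf
    -- ultrafilter
    set U : Ultrafilter ℕ := Ultrafilter.of atTop with hUdef
    have hU : (U : Filter ℕ) ≤ atTop := Ultrafilter.of_le atTop
    -- the sequences
    set e : ℤ → ℕ → ℕ := fun k n => ((n : ℤ) + k).toNat with hedef
    set c : ℤ → X → ℕ → ℂ := fun k y n => f n ((T ^ (e k n)) y) with hcdef
    have hcbd : ∀ (k : ℤ) (y : X) (n : ℕ), ‖c k y n‖ ≤ K' * ‖y‖ := by
      intro k y n
      calc ‖c k y n‖ ≤ ‖f n‖ * ‖(T ^ (e k n)) y‖ := (f n).le_opNorm _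
        _ = ‖(T ^ (e k n)) y‖ := by rw [hf1 n, one_mul]
        _ ≤ ‖T ^ (e k n)‖ * ‖y‖ := (T ^ (e k n)).le_opNorm _
        _ ≤ K' * ‖y‖ := mul_le_mul_of_nonneg_right (hK' _) (norm_nonneg _)
    set g0 : ℤ → X → ℂ := fun k y => limUnder (U : Filter ℕ) (c k y) with hg0def
    have htend : ∀ (k : ℤ) (y : X), Tendsto (c k y) (U : Filter ℕ) (𝓝 (g0 k y)) :=
      fun k y => ult_tendsto U (c k y) (K' * ‖y‖) (hcbd k y)
    have hadd : ∀ (k : ℤ) (y z : X), g0 k (y + z) = g0 k y + g0 k z := by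
      intro k y z
      have : Tendsto (c k (y + z)) (U : Filter ℕ) (𝓝 (g0 k y + g0 k z)) :=
        ((htend k y).add (htend k z)).congr fun n => by simp [hcdef]
      exact this.limUnder_eq
    have hsmul : ∀ (k : ℤ) (a : ℂ) (y : X), g0 k (a • y) = a * g0 k y := by
      intro k a y
      have : Tendsto (c k (a • y)) (U : Filter ℕ) (𝓝 (a * g0 k y)) :=
        ((htend k y).const_mul a).congr fun n => by simp only [hcdef, map_smul, smul_eq_mul]
      exact this.limUnder_eq
    have hg0bd : ∀ (k : ℤ) (y : X), ‖g0 k y‖ ≤ K' * ‖y‖ := by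
      intro k y
      exact le_of_tendsto' ((htend k y).norm) fun n => hcbd k y n
    set g : ℤ → (X →L[ℂ] ℂ) := fun k =>
      LinearMap.mkContinuous
        { toFun := g0 k
          map_add' := hadd k
          map_smul' := fun a y => by simpa using hsmul k a y } K' (hg0bd k) with hgdef
    have hgapply : ∀ (k : ℤ) (y : X), g k y = g0 k y := fun k y => rfl
    -- recurrence
    have hrec : ∀ k : ℤ, (g k).comp T = g (k + 1) := by
      intro k
      ext y
      show g0 k (T y) = g0 (k + 1) y
      have hEq : ∀ᶠ n in (U : Filter ℕ), c k (T y) n = c (k + 1) y n := by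
        apply Filter.Eventually.filter_mono hU
        filter_upwards [eventually_ge_atTop k.natAbs] with n hn
        have h1 : e (k + 1) n = e k n + 1 := by
          simp only [hedef]
          omega
        have h2 : (T ^ (e k n)) (T y) = (T ^ (e k n + 1)) y := by
          rw [pow_succ]
          rfl
        simp only [hcdef, h1, h2]
      have : Tendsto (c (k + 1) y) (U : Filter ℕ) (𝓝 (g0 k (T y))) :=
        (htend k (T y)).congr' hEq
      exact (this.limUnder_eq).symm
    -- apply the hypothesis
    have h0 : g 0 x = 0 :=
      hx (g 0) ⟨g, rfl, hrec, K', fun k =>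
        LinearMap.mkContinuous_norm_le _ (le_of_lt hK'pos) _⟩
    -- but Re (g 0 x) ≥ ε / K' > 0
    have hc0 : ∀ n : ℕ, (c 0 x n).re = ‖(T ^ n) x‖ := by
      intro n
      have he0 : e 0 n = n := by simp [hedef]
      simp only [hcdef, he0, hf2 n, Complex.ofReal_re]
    have hretend : Tendsto (fun n => (c 0 x n).re) (U : Filter ℕ) (𝓝 ((g0 0 x).re)) :=
      (Complex.continuous_re.tendsto _).comp (htend 0 x)
    have hge : ε / K' ≤ (g0 0 x).re := by
      apply ge_of_tendsto' hretend
      intro n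
      rw [hc0 n]
      exact hlow n
    rw [hgapply 0 x] at h0
    rw [h0] at hge
    simp only [Complex.zero_re] at hge
    exact absurd hge (not_le.mpr (div_pos hε hK'pos))
  · -- easy direction: X₀ ⊆ annihilator
    intro hx f ⟨xs, h0, hrec, C, hC⟩
    have key : ∀ n : ℕ, f x = xs (-(n : ℤ)) ((T ^ n) x) := by
      intro n
      induction n with
      | zero => simp [h0]
      | succ n ih =>
        have hr := hrec (-(n + 1 : ℕ) : ℤ)
        have harg : (-(n + 1 : ℕ) : ℤ) + 1 = -(n : ℤ) := by push_cast; ring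
        rw [harg] at hr
        calc f x = xs (-(n : ℤ)) ((T ^ n) x) := ih
          _ = ((xs (-(n + 1 : ℕ) : ℤ)).comp T) ((T ^ n) x) := by rw [hr]
          _ = xs (-(n + 1 : ℕ) : ℤ) ((T ^ (n + 1)) x) := by
              rw [ContinuousLinearMap.comp_apply, pow_succ']
              rfl
    have hbound : ∀ n : ℕ, ‖f x‖ ≤ C * ‖(T ^ n) x‖ := by
      intro n
      rw [key n]
      calc ‖xs (-(n : ℤ)) ((T ^ n) x)‖ ≤ ‖xs (-(n : ℤ))‖ * ‖(T ^ n) x‖ :=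
            (xs _).le_opNorm _
        _ ≤ C * ‖(T ^ n) x‖ := mul_le_mul_of_nonneg_right (hC _) (norm_nonneg _)
    have htend0 : Tendsto (fun n : ℕ => C * ‖(T ^ n) x‖) atTop (𝓝 0) := by
      simpa using hx.const_mul C
    have : ‖f x‖ ≤ 0 := ge_of_tendsto' htend0 fun n => hbound n
    have := le_antisymm this (norm_nonneg _)
    exact norm_eq_zero.mp this
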